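/- Let H > 0 and 0 < p < 1, and define U_p : [0,∞) → ℝ by U_p(x) = x for 0 ≤ x < H and U_p(x) = H(x/H)^p for x ≥ H. Then the dual function Ũ_p(y) = sup_{x ≥ 0}(U_p(x) − x·y) satisfies: Ũ_p(y) = H·((1−p)/p)·p^{1/(1−p)}·y^{p/(p−1)} for 0 < y ≤ p, with the supremum attained at x* = H(y/p)^{1/(p−1)}; Ũ_p(y) = H(1 − y) for p < y ≤ 1, with the supremum attained at x* = H; and Ũ_p(y) = 0 for y ≥ 1, with the supremum attained at x* = 0. -/

import Mathlib

open Real Set Filter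

private lemma bern {p s : ℝ} (hp0 : 0 ≤ p) (hp1 : p ≤ 1) (hs : 0 ≤ s) :
    s ^ p ≤ 1 + p * (s - 1) := by
  have h := rpow_one_add_le_one_add_mul_self (s := s - 1) (by linarith) hp0 hp1
  simpa using h

private lemma tangent {p s w : ℝ} (hp0 : 0 < p) (hp1 : p ≤ 1) (hs : 0 ≤ s) (hw : 0 < w) :
    s ^ p ≤ w ^ p + p * w ^ (p - 1) * (s - w) := by
  have h := bern hp0.le hp1 (s := s / w) (by positivity)
  have hwp : (0:ℝ) < w ^ p := rpow_pos_of_pos hw p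
  have h1 : (s / w) ^ p = s ^ p / w ^ p := Real.div_rpow hs hw.le p
  have h3 : w ^ (p - 1) = w ^ p / w := by rw [Real.rpow_sub hw, Real.rpow_one]
  rw [h1] at h
  have h2 : s ^ p ≤ (1 + p * (s / w - 1)) * w ^ p := (div_le_iff₀ hwp).mp h
  calc s ^ p ≤ (1 + p * (s / w - 1)) * w ^ p := h2
    _ = w ^ p + p * (w ^ p / w) * (s - w) := by field_simp
    _ = w ^ p + p * w ^ (p - 1) * (s - w) := by rw [h3]

private lemma val_eq {H p y : ℝ} (hH : 0 < H) (hp0 : 0 < p) (hp1 : p < 1) (hy : 0 < y) :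
    H * ((y / p) ^ (1 / (p - 1))) ^ p - H * (y / p) ^ (1 / (p - 1)) * y =
      H * ((1 - p) / p) * p ^ (1 / (1 - p)) * y ^ (p / (p - 1)) := by
  have hp1' : p - 1 ≠ 0 := by linarith
  have h1p : (1:ℝ) - p ≠ 0 := by linarith
  set q : ℝ := 1 / (p - 1) with hq
  have hqp : q * p = q + 1 := by rw [hq]; field_simp; ring
  have hyp : (0:ℝ) < y / p := by positivity
  have e1 : ((y / p) ^ q) ^ p = (y / p) ^ (q * p) := (Real.rpow_mul hyp.le q p).symm
  have e2 : (y / p) ^ (q * p) = y ^ (q * p) / p ^ (q * p) := Real.div_rpow hy.le hp0.le _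
  have e3 : (y / p) ^ q = y ^ q / p ^ q := Real.div_rpow hy.le hp0.le _
  have e4 : y ^ (q * p) = y ^ q * y := by rw [hqp, Real.rpow_add_one hy.ne']
  have e5 : p ^ (q * p) = p ^ q * p := by rw [hqp, Real.rpow_add_one hp0.ne']
  have e6 : p ^ (1 / (1 - p)) = (p ^ q)⁻¹ := by
    rw [← Real.rpow_neg hp0.le]
    congr 1
    rw [hq]
    field_simp
    ring
  have e7 : y ^ (p / (p - 1)) = y ^ q * y := by
    rw [show p / (p - 1) = q * p by rw [hq]; ring, e4]
  rw [e1, e2, e3, e4, e5, e6, e7]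
  have hpq : p ^ q ≠ 0 := (rpow_pos_of_pos hp0 q).ne'
  field_simp

/-- the dual function `Ũ_p(y) = sup_{x ≥ 0}(U_p(x) - x y)` of the utility
`U_p(x) = x` for `0 ≤ x < H` and `U_p(x) = H (x/H)^p` for `x ≥ H`, with the supremum
attained at `x* = H (y/p)^{1/(p-1)}` when `0 < y ≤ p`, at `x* = H` when `p < y ≤ 1`,
and at `x* = 0` when `y ≥ 1`. -/
theorem stmt_15 (H p : ℝ) (hH : 0 < H) (hp0 : 0 < p) (hp1 : p < 1) :
    let Up : ℝ → ℝ := fun t => if t < H then t else H * (t / H) ^ p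
    ∀ y : ℝ,
      (0 < y → y ≤ p →
        IsGreatest ((fun t => Up t - t * y) '' Ici 0)
          (H * ((1 - p) / p) * p ^ (1 / (1 - p)) * y ^ (p / (p - 1))) ∧
        Up (H * (y / p) ^ (1 / (p - 1))) - (H * (y / p) ^ (1 / (p - 1))) * y =
          H * ((1 - p) / p) * p ^ (1 / (1 - p)) * y ^ (p / (p - 1))) ∧
      (p < y → y ≤ 1 →
        IsGreatest ((fun t => Up t - t * y) '' Ici 0) (H * (1 - y)) ∧
        Up H - H * y = H * (1 - y)) ∧
      (1 ≤ y →
        IsGreatest ((fun t => Up t - t * y) '' Ici 0) 0 ∧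
        Up 0 - 0 * y = 0) := by
  intro Up y
  have hH' : H ≠ 0 := hH.ne'
  -- Up t ≤ H * (t/H)^p for all t ≥ 0
  have up_le : ∀ t : ℝ, 0 ≤ t → Up t ≤ H * (t / H) ^ p := by
    intro t ht
    by_cases h : t < H
    · simp only [Up, if_pos h]
      rcases eq_or_lt_of_le ht with h0 | h0
      · rw [← h0, zero_div, Real.zero_rpow hp0.ne', mul_zero]
      · have h1 : t / H ≤ (t / H) ^ p := by
          calc t / H = (t / H) ^ (1:ℝ) := (Real.rpow_one _).symm
            _ ≤ (t / H) ^ p := Real.rpow_le_rpow_of_exponent_ge (by positivity)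
                (by rw [div_le_one hH]; exact h.le) hp1.le
        calc t = H * (t / H) := by field_simp
          _ ≤ H * (t / H) ^ p := by nlinarith
    · simp only [Up, if_neg h]
      exact le_refl _
  refine ⟨?_, ?_, ?_⟩
  · -- Case 0 < y ≤ p
    intro hy hyp
    have hp1' : p - 1 ≠ 0 := by linarith
    set w : ℝ := (y / p) ^ (1 / (p - 1)) with hwdef
    have hwpos : 0 < w := rpow_pos_of_pos (by positivity) _
    have hw1 : 1 ≤ w :=
      Real.one_le_rpow_of_pos_of_le_one_of_nonpos (by positivity)
        (by rw [div_le_one hp0]; exact hyp)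
        (by rw [one_div]; exact le_of_lt (inv_neg''.mpr (by linarith)))
    have hUp : Up (H * w) = H * w ^ p := by
      have hnl : ¬ (H * w < H) := by nlinarith
      simp only [Up, if_neg hnl]
      rw [mul_div_cancel_left₀ _ hH']
    have hveq := val_eq hH hp0 hp1 hy
    rw [← hwdef] at hveq
    have hval : Up (H * w) - (H * w) * y =
        H * ((1 - p) / p) * p ^ (1 / (1 - p)) * y ^ (p / (p - 1)) := by
      rw [hUp]; linarith [hveq]
    refine ⟨⟨⟨H * w, mem_Ici.mpr (by positivity), hval⟩, ?_⟩, hval⟩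
    rintro v ⟨t, ht, rfl⟩
    simp only [mem_Ici] at ht
    have h1 : Up t ≤ H * (t / H) ^ p := up_le t ht
    have h2 : (t / H) ^ p ≤ w ^ p + p * w ^ (p - 1) * (t / H - w) :=
      tangent hp0 hp1.le (by positivity) hwpos
    have hpw : p * w ^ (p - 1) = y := by
      have : w ^ (p - 1) = (y / p) ^ (1 / (p - 1) * (p - 1)) := by
        rw [hwdef, ← Real.rpow_mul (by positivity : (0:ℝ) ≤ y / p)]
      rw [this, one_div, inv_mul_cancel₀ hp1', Real.rpow_one]
      field_simp
    have hth : H * (t / H) = t := by field_simp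
    have h3 : H * (t / H) ^ p ≤ H * w ^ p + p * w ^ (p - 1) * (H * (t / H)) -
        p * w ^ (p - 1) * (H * w) := by nlinarith
    rw [hth, hpw] at h3
    have : Up t - t * y ≤ H * w ^ p - H * w * y := by linarith
    calc Up t - t * y ≤ H * w ^ p - H * w * y := this
      _ = H * ((1 - p) / p) * p ^ (1 / (1 - p)) * y ^ (p / (p - 1)) := hveq
  · -- Case p < y ≤ 1
    intro hy hy1
    have hUpH : Up H = H := by
      simp only [Up, if_neg (lt_irrefl H), div_self hH', Real.one_rpow, mul_one]
    have hval : Up H - H * y = H * (1 - y) := by rw [hUpH]; ring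
    refine ⟨⟨⟨H, hH.le, hval⟩, ?_⟩, hval⟩
    rintro v ⟨t, ht, rfl⟩
    simp only [mem_Ici] at ht
    by_cases h : t < H
    · simp only [Up, if_pos h]
      nlinarith
    · push_neg at h
      simp only [Up, if_neg (not_lt.mpr h)]
      have hs1 : (1:ℝ) ≤ t / H := by rw [le_div_iff₀ hH]; linarith
      have hb := bern hp0.le hp1.le (s := t / H) (by positivity)
      have hby : (t / H) ^ p ≤ 1 + y * (t / H - 1) := by nlinarith
      have hth : H * (t / H) = t := by field_simp
      nlinarith
  · -- Case 1 ≤ y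
    intro hy
    have hval : Up 0 - 0 * y = 0 := by
      simp [Up, hH]
    refine ⟨⟨⟨0, mem_Ici.mpr le_rfl, hval⟩, ?_⟩, hval⟩
    rintro v ⟨t, ht, rfl⟩
    simp only [mem_Ici] at ht
    by_cases h : t < H
    · simp only [Up, if_pos h]
      nlinarith
    · push_neg at h
      simp only [Up, if_neg (not_lt.mpr h)]
      have hs1 : (1:ℝ) ≤ t / H := by rw [le_div_iff₀ hH]; linarith
      have h1 : (t / H) ^ p ≤ t / H := by
        calc (t / H) ^ p ≤ (t / H) ^ (1:ℝ) :=
          Real.rpow_le_rpow_of_exponent_le hs1 hp1.le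
          _ = t / H := Real.rpow_one _
      have hth : H * (t / H) = t := by field_simp
      nlinarith
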